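/- For every natural number n, the Hankel determinant of the moment sequence satisfies det( (μ_{i+j})_{0 ≤ i,j ≤ n} ) = (b·c)^n · (b·(b+c))^{binom(n,2)}, where binom(n,2) = n(n−1)/2. -/
import Mathlib

open Polynomial Finset

namespace LBPHankel

/-- The biorthogonal partner family. -/
noncomputable def Q (b c : ℝ) : ℕ → Polynomial ℝ
  | 0 => 1
  | 1 => X - C c
  | (n+2) => (X - C (2*b+c)) * Q b c (n+1)
      - C (if n = 0 then b*c else b*(b+c)) * Q b c n

/-- Closed form of the pairing `L (P i * Q j)`. -/
noncomputable def E (b c : ℝ) (i j : ℕ) : ℝ :=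
  if j = 0 then (if i = 0 then 1 else 0)
  else if i = 0 then 0
  else ((i-1).choose (j-1) : ℝ) * c * b^i * (b+c)^(j-1)

/-- The moment functional, as a linear map. -/
noncomputable def L (μ : ℕ → ℝ) : Polynomial ℝ →ₗ[ℝ] ℝ :=
  Polynomial.lsum (fun k => LinearMap.id.smulRight (μ k))

lemma L_apply (μ : ℕ → ℝ) (f : Polynomial ℝ) :
    L μ f = f.sum (fun k a => a * μ k) := by
  simp [L, Polynomial.lsum_apply, smul_eq_mul]

lemma L_monomial (μ : ℕ → ℝ) (m : ℕ) (a : ℝ) :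
    L μ (monomial m a) = a * μ m := by
  rw [L_apply, Polynomial.sum_monomial_index]
  simp

lemma L_eq_sum_range (μ : ℕ → ℝ) (f : Polynomial ℝ) (N : ℕ) (h : f.natDegree < N) :
    L μ f = ∑ k ∈ range N, f.coeff k * μ k := by
  rw [L_apply]
  exact Polynomial.sum_over_range' f (by simp) N h

lemma L_C_mul (μ : ℕ → ℝ) (a : ℝ) (f : Polynomial ℝ) :
    L μ (C a * f) = a * L μ f := by
  rw [← smul_eq_C_mul, map_smul, smul_eq_mul]

lemma Q_monic (b c : ℝ) : ∀ j, (Q b c j).Monic ∧ (Q b c j).natDegree = j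
  | 0 => by constructor <;> simp [Q, monic_one]
  | 1 => by constructor <;> simp [Q, monic_X_sub_C]
  | (n+2) => by
    obtain ⟨h1m, h1d⟩ := Q_monic b c (n+1)
    obtain ⟨h0m, h0d⟩ := Q_monic b c n
    have hm : ((X - C (2*b+c)) * Q b c (n+1)).Monic :=
      (monic_X_sub_C _).mul h1m
    have hdm : ((X - C (2*b+c)) * Q b c (n+1)).natDegree = n + 2 := by
      rw [natDegree_mul (monic_X_sub_C _).ne_zero h1m.ne_zero, natDegree_X_sub_C, h1d]
      omega
    have hltn : (C (if n = 0 then b*c else b*(b+c)) * Q b c n).natDegree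
        < ((X - C (2*b+c)) * Q b c (n+1)).natDegree := by
      rw [hdm]
      exact lt_of_le_of_lt (natDegree_C_mul_le _ _) (by omega)
    have hlt := Polynomial.degree_lt_degree hltn
    refine ⟨hm.sub_of_left hlt, ?_⟩
    show ((X - C (2*b+c)) * Q b c (n+1) - _).natDegree = n + 2
    rw [← hdm]
    apply natDegree_sub_eq_left_of_natDegree_lt
    exact hltn

lemma hockey (i j : ℕ) : ∑ m ∈ range (i+1), ((m.choose j : ℝ)) = ((i+1).choose (j+1) : ℝ) := by
  induction i with
  | zero =>
    rw [Finset.sum_range_one]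
    cases j with
    | zero => simp
    | succ m => simp [Nat.choose_eq_zero_of_lt (by omega : (1:ℕ) < m+1+1)]
  | succ i ih =>
    rw [Finset.sum_range_succ, ih, Nat.choose_succ_succ (i+1) j]
    push_cast
    ring

/-- The key arithmetic identity for the column induction. -/
lemma Estep (b c : ℝ) (i j : ℕ) :
    (∑ k ∈ range (i+1), b^k * (E b c (i+1-k) (j+1) + c * E b c (i-k) (j+1)))
      - (2*b+c) * E b c i (j+1) - (if j = 0 then b*c else b*(b+c)) * E b c i j
    = E b c i (j+2) := by
  have hsum1 : ∑ k ∈ range (i+1), b^k * E b c (i+1-k) (j+1)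
      = c * b^(i+1) * (b+c)^j * ((i+1).choose (j+1) : ℝ) := by
    have h : ∀ k ∈ range (i+1), b^k * E b c (i+1-k) (j+1)
        = c * b^(i+1) * (b+c)^j * ((i-k).choose j : ℝ) := by
      intro k hk
      simp only [mem_range] at hk
      have h1 : i + 1 - k ≠ 0 := by omega
      simp only [E, if_neg (Nat.succ_ne_zero j), if_neg h1]
      rw [show i+1-k-1 = i-k by omega, Nat.succ_sub_one]
      have hbpow : b ^ k * b ^ (i + 1 - k) = b ^ (i + 1) := by
        rw [← pow_add, show k + (i+1-k) = i+1 by omega]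
      linear_combination (((i-k).choose j : ℝ) * c * (b+c)^j) * hbpow
    rw [Finset.sum_congr rfl h, ← Finset.mul_sum]
    have key : ∑ k ∈ range (i+1), ((i-k).choose j : ℝ) = ((i+1).choose (j+1) : ℝ) := by
      rw [← hockey i j,
        show (∑ k ∈ range (i+1), ((i-k).choose j : ℝ))
          = ∑ k ∈ range (i+1), (((i+1-1-k).choose j : ℝ)) from
          Finset.sum_congr rfl fun k hk => by rw [show i+1-1-k = i-k by omega]]
      exact Finset.sum_range_reflect (fun m => ((m.choose j : ℝ))) (i+1)
    rw [key]
  have hsum2 : ∑ k ∈ range (i+1), b^k * (c * E b c (i-k) (j+1))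
      = c^2 * b^i * (b+c)^j * ((i).choose (j+1) : ℝ) := by
    rcases Nat.eq_zero_or_pos i with hi | hi
    · subst hi; simp [E]
    · rw [Finset.sum_range_succ]
      have hlast : b^i * (c * E b c (i-i) (j+1)) = 0 := by
        simp [E, Nat.sub_self]
      rw [hlast, add_zero]
      have h : ∀ k ∈ range i, b^k * (c * E b c (i-k) (j+1))
          = c^2 * b^i * (b+c)^j * ((i-1-k).choose j : ℝ) := by
        intro k hk
        simp only [mem_range] at hk
        have h1 : i - k ≠ 0 := by omega
        simp only [E, if_neg (Nat.succ_ne_zero j), if_neg h1]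
        rw [Nat.succ_sub_one, show i-k-1 = i-1-k by omega]
        have hbpow : b ^ k * b ^ (i - k) = b ^ i := by
          rw [← pow_add, show k + (i-k) = i by omega]
        linear_combination (((i-1-k).choose j : ℝ) * c^2 * (b+c)^j) * hbpow
      rw [Finset.sum_congr rfl h, ← Finset.mul_sum]
      obtain ⟨i', rfl⟩ : ∃ i', i = i' + 1 := ⟨i - 1, by omega⟩
      simp only [Nat.add_sub_cancel]
      have key : ∑ k ∈ range (i'+1), ((i'-k).choose j : ℝ) = ((i'+1).choose (j+1) : ℝ) := by
        rw [← hockey i' j,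
          show (∑ k ∈ range (i'+1), ((i'-k).choose j : ℝ))
            = ∑ k ∈ range (i'+1), (((i'+1-1-k).choose j : ℝ)) from
            Finset.sum_congr rfl fun k hk => by rw [show i'+1-1-k = i'-k by omega]]
        exact Finset.sum_range_reflect (fun m => ((m.choose j : ℝ))) (i'+1)
      rw [key]
  have hsplit : ∑ k ∈ range (i+1), b^k * (E b c (i+1-k) (j+1) + c * E b c (i-k) (j+1))
      = (∑ k ∈ range (i+1), b^k * E b c (i+1-k) (j+1))
        + ∑ k ∈ range (i+1), b^k * (c * E b c (i-k) (j+1)) := by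
    rw [← Finset.sum_add_distrib]
    exact Finset.sum_congr rfl (fun k _ => by ring)
  rw [hsplit, hsum1, hsum2]
  rcases Nat.eq_zero_or_pos i with hi | hi
  · subst hi
    rcases Nat.eq_zero_or_pos j with hj | hj
    · subst hj; norm_num [E]; ring
    · obtain ⟨j', rfl⟩ : ∃ j', j = j' + 1 := ⟨j - 1, by omega⟩
      have hch : Nat.choose 1 (j'+1+1) = 0 := Nat.choose_eq_zero_of_lt (by omega)
      simp [E, hch]
  · obtain ⟨i', rfl⟩ : ∃ i', i = i' + 1 := ⟨i - 1, by omega⟩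
    rcases Nat.eq_zero_or_pos j with hj | hj
    · subst hj
      simp only [E, if_neg (Nat.succ_ne_zero _), if_pos rfl, Nat.succ_sub_one, zero_add,
        Nat.choose_one_right, Nat.choose_zero_right, Nat.choose_self, pow_zero, pow_one,
        mul_zero, mul_one, Nat.add_sub_cancel]
      push_cast
      ring
    · obtain ⟨j', rfl⟩ : ∃ j', j = j' + 1 := ⟨j - 1, by omega⟩
      have hne : i' + 1 ≠ 0 := Nat.succ_ne_zero _
      simp only [E, if_neg (Nat.succ_ne_zero _), if_neg hne, Nat.succ_sub_one,
        Nat.add_sub_cancel]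
      have p1 : (((i'+1+1).choose (j'+1+1) : ℕ) : ℝ)
          = ((i'+1).choose (j'+1) : ℝ) + ((i'+1).choose (j'+1+1) : ℝ) := by
        exact_mod_cast Nat.choose_succ_succ (i'+1) (j'+1)
      have p2 : (((i'+1).choose (j'+1+1) : ℕ) : ℝ)
          = (i'.choose (j'+1) : ℝ) + (i'.choose (j'+2) : ℝ) := by
        exact_mod_cast Nat.choose_succ_succ i' (j'+1)
      have p3 : (((i'+1).choose (j'+1) : ℕ) : ℝ)
          = (i'.choose j' : ℝ) + (i'.choose (j'+1) : ℝ) := by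
        exact_mod_cast Nat.choose_succ_succ i' j'
      linear_combination (c * b^(i'+1+1) * (b+c)^(j'+1)) * p1
        + (c^2 * b^(i'+1) * (b+c)^(j'+1) + c * b^(i'+1+1) * (b+c)^(j'+1)) * p2
        + (c * b^(i'+1+1) * (b+c)^(j'+1)) * p3

section Main

variable {b c : ℝ} {P : ℕ → Polynomial ℝ} {μ : ℕ → ℝ}

variable (hP0 : P 0 = 1) (hP1 : P 1 = X - C c)
  (hP : ∀ n, 2 ≤ n → P n = (X - C c) * P (n - 1) - C b * X * P (n - 2))
  (hμ : ∀ n, (∑ k ∈ Finset.range (n + 1), (P n).coeff k * μ k) = if n = 0 then 1 else 0)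

include hP0 hP1 hP

lemma P_rec (m : ℕ) : P (m+2) = (X - C c) * P (m+1) - C b * X * P m := by
  have := hP (m+2) (by omega)
  simpa using this

lemma P_monic : ∀ i, (P i).Monic ∧ (P i).natDegree = i := by
  intro i
  induction i using Nat.strong_induction_on with
  | _ i ih =>
    match i with
    | 0 => constructor <;> simp [hP0, monic_one]
    | 1 => constructor <;> simp [hP1, monic_X_sub_C]
    | (m+2) =>
      obtain ⟨h1m, h1d⟩ := ih (m+1) (by omega)
      obtain ⟨h0m, h0d⟩ := ih m (by omega)
      have hm : ((X - C c) * P (m+1)).Monic := (monic_X_sub_C _).mul h1m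
      have hdm : ((X - C c) * P (m+1)).natDegree = m + 2 := by
        rw [natDegree_mul (monic_X_sub_C _).ne_zero h1m.ne_zero, natDegree_X_sub_C, h1d]
        omega
      have hltn : (C b * X * P m).natDegree < ((X - C c) * P (m+1)).natDegree := by
        rw [hdm]
        calc (C b * X * P m).natDegree ≤ (C b * X).natDegree + (P m).natDegree :=
              natDegree_mul_le
          _ ≤ 1 + m := by
              gcongr
              · exact le_trans (natDegree_C_mul_le _ _) (by simp)
              · omega
          _ < m + 2 := by omega
      rw [P_rec hP0 hP1 hP m]
      exact ⟨hm.sub_of_left (degree_lt_degree hltn),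
        by rw [natDegree_sub_eq_left_of_natDegree_lt hltn, hdm]⟩

/-- Expansion of `X * P i` in the `P` basis. -/
lemma xP : ∀ i, X * P i =
    ∑ k ∈ range (i+1), C (b^k) * (P (i+1-k) + C c * P (i-k)) := by
  intro i
  induction i with
  | zero =>
    rw [Finset.sum_range_one]
    norm_num [hP0, hP1]
  | succ i ih =>
    have hrec := P_rec hP0 hP1 hP i
    have hx : X * P (i+1) = P (i+2) + C c * P (i+1) + C b * (X * P i) := by
      rw [hrec]; ring
    have hsum : C b * (X * P i) =
        ∑ k ∈ range (i+1), C (b^(k+1)) * (P (i+1-k) + C c * P (i-k)) := by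
      rw [ih, Finset.mul_sum]
      refine Finset.sum_congr rfl (fun k _ => ?_)
      rw [pow_succ, show (b^k * b) = b * b^k from mul_comm _ _, map_mul]
      ring
    rw [hx, hsum, Finset.sum_range_succ' (fun k => C (b^k) * (P (i+1+1-k) + C c * P (i+1-k))) (i+1)]
    simp only [Nat.succ_sub_succ, Nat.sub_zero, pow_zero, map_one, one_mul]
    rw [show i+1+1 = i+2 from rfl]
    ring

include hμ

lemma LP (i : ℕ) : L μ (P i) = if i = 0 then 1 else 0 := by
  rw [L_eq_sum_range μ (P i) (i+1) (by rw [(P_monic hP0 hP1 hP i).2]; omega)]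
  exact hμ i

/-- The main computation: the pairing of the two families. -/
lemma eEq : ∀ j i, L μ (P i * Q b c j) = E b c i j := by
  intro j
  induction j using Nat.strong_induction_on with
  | _ j ihj =>
    match j with
    | 0 =>
      intro i
      show L μ (P i * 1) = E b c i 0
      rw [mul_one, LP hP0 hP1 hP hμ]
      simp [E]
    | 1 =>
      intro i
      show L μ (P i * (X - C c)) = E b c i 1
      have h1 : P i * (X - C c) = X * P i - C c * P i := by ring
      rw [h1, map_sub, L_C_mul, LP hP0 hP1 hP hμ, xP hP0 hP1 hP i, map_sum]
      have h2 : ∀ k ∈ range (i+1), L μ (C (b^k) * (P (i+1-k) + C c * P (i-k)))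
          = b^k * ((if i+1-k = 0 then (1:ℝ) else 0) + c * (if i-k = 0 then 1 else 0)) := by
        intro k _
        rw [L_C_mul, map_add, L_C_mul, LP hP0 hP1 hP hμ, LP hP0 hP1 hP hμ]
      rw [Finset.sum_congr rfl h2]
      have h3 : ∑ k ∈ range (i+1),
          b^k * ((if i+1-k = 0 then (1:ℝ) else 0) + c * (if i-k = 0 then 1 else 0))
          = c * b^i := by
        rw [Finset.sum_eq_single_of_mem i (by simp)]
        · rw [if_neg (by omega), Nat.sub_self, if_pos rfl]
          ring
        · intro k hk hki
          simp only [mem_range] at hk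
          rw [if_neg (by omega), if_neg (by omega)]
          ring
      rw [h3]
      rcases Nat.eq_zero_or_pos i with hi | hi
      · subst hi; simp [E]
      · obtain ⟨i', rfl⟩ : ∃ i', i = i' + 1 := ⟨i - 1, by omega⟩
        simp [E]
    | (j+2) =>
      intro i
      have hQ : Q b c (j+2) = (X - C (2*b+c)) * Q b c (j+1)
          - C (if j = 0 then b*c else b*(b+c)) * Q b c j := rfl
      have hsplit : P i * Q b c (j+2)
          = X * (P i * Q b c (j+1)) - C (2*b+c) * (P i * Q b c (j+1))
            - C (if j = 0 then b*c else b*(b+c)) * (P i * Q b c j) := by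
        rw [hQ]; ring
      have hxPQ : X * (P i * Q b c (j+1))
          = ∑ k ∈ range (i+1), C (b^k) *
              (P (i+1-k) * Q b c (j+1) + C c * (P (i-k) * Q b c (j+1))) := by
        rw [show X * (P i * Q b c (j+1)) = (X * P i) * Q b c (j+1) by ring,
          xP hP0 hP1 hP i, Finset.sum_mul]
        exact Finset.sum_congr rfl fun k _ => by ring
      rw [hsplit, map_sub, map_sub, L_C_mul, L_C_mul, hxPQ, map_sum]
      have h2 : ∀ k ∈ range (i+1),
          L μ (C (b^k) * (P (i+1-k) * Q b c (j+1) + C c * (P (i-k) * Q b c (j+1))))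
          = b^k * (E b c (i+1-k) (j+1) + c * E b c (i-k) (j+1)) := by
        intro k _
        rw [L_C_mul, map_add, L_C_mul, ihj (j+1) (by omega), ihj (j+1) (by omega)]
      rw [Finset.sum_congr rfl h2, ihj (j+1) (by omega), ihj j (by omega)]
      exact Estep b c i j

end Main



lemma L_mul (μ : ℕ → ℝ) (f g : Polynomial ℝ) (N : ℕ)
    (hf : f.natDegree < N) (hg : g.natDegree < N) :
    L μ (f * g) = ∑ k ∈ range N, ∑ l ∈ range N, f.coeff k * g.coeff l * μ (k+l) := by
  conv_lhs => rw [f.as_sum_range' N hf, g.as_sum_range' N hg]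
  rw [Finset.sum_mul_sum, map_sum]
  refine Finset.sum_congr rfl fun k _ => ?_
  rw [map_sum]
  refine Finset.sum_congr rfl fun l _ => ?_
  rw [Polynomial.monomial_mul_monomial, L_monomial]

lemma prodE (b c : ℝ) :
    ∀ n, ∏ i ∈ range (n+1), E b c i i = (b*c)^n * (b*(b+c))^(n.choose 2) := by
  intro n
  induction n with
  | zero => simp [E]
  | succ n ih =>
    rw [Finset.prod_range_succ, ih]
    have hEd : E b c (n+1) (n+1) = c * b^(n+1) * (b+c)^n := by
      simp [E, Nat.succ_sub_one, Nat.choose_self]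
    rw [hEd, show (n+1).choose 2 = n.choose 1 + n.choose 2 from Nat.choose_succ_succ n 1,
      Nat.choose_one_right]
    conv_rhs => rw [pow_add (b*(b+c)) n (n.choose 2), mul_pow b (b+c) n,
      pow_succ (b*c) n, mul_pow b c n]
    ring

end LBPHankel

open LBPHankel in
/-- The Hankel transform of the moments of the constant-coefficient Laurent
biorthogonal polynomials: `det(μ_{i+j})_{0≤i,j≤n} = (bc)^n · (b(b+c))^{C(n,2)}`. -/
theorem lbp_moment_hankel
    (b c : ℝ) (hb : b ≠ 0) (hc : c ≠ 0)
    (P : ℕ → Polynomial ℝ)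
    (hP0 : P 0 = 1)
    (hP1 : P 1 = Polynomial.X - Polynomial.C c)
    (hP : ∀ n, 2 ≤ n →
      P n = (Polynomial.X - Polynomial.C c) * P (n - 1)
            - Polynomial.C b * Polynomial.X * P (n - 2))
    (μ : ℕ → ℝ)
    (hμ : ∀ n, (∑ k ∈ Finset.range (n + 1), (P n).coeff k * μ k) =
      if n = 0 then 1 else 0)
    (n : ℕ) :
    Matrix.det (Matrix.of fun i j : Fin (n + 1) => μ ((i : ℕ) + (j : ℕ))) =
      (b * c) ^ n * (b * (b + c)) ^ (n.choose 2) := by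
  have hdP := P_monic hP0 hP1 hP
  have hdQ := Q_monic b c
  set H : Matrix (Fin (n+1)) (Fin (n+1)) ℝ :=
    Matrix.of fun i j : Fin (n + 1) => μ ((i : ℕ) + (j : ℕ)) with hH
  set T : Matrix (Fin (n+1)) (Fin (n+1)) ℝ :=
    Matrix.of fun i k : Fin (n + 1) => (P (i:ℕ)).coeff (k:ℕ) with hT
  set S : Matrix (Fin (n+1)) (Fin (n+1)) ℝ :=
    Matrix.of fun l j : Fin (n + 1) => (Q b c (j:ℕ)).coeff (l:ℕ) with hS
  -- determinants of the triangular factors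
  have hdetT : T.det = 1 := by
    rw [Matrix.det_of_lowerTriangular T (fun i j hij => ?_)]
    · refine Finset.prod_eq_one fun i _ => ?_
      show (P (i:ℕ)).coeff (i:ℕ) = 1
      have : (P (i:ℕ)).coeff (i:ℕ) = (P (i:ℕ)).leadingCoeff := by
        rw [Polynomial.leadingCoeff, (hdP (i:ℕ)).2]
      rw [this]
      exact (hdP (i:ℕ)).1
    · have hij' : (i:ℕ) < (j:ℕ) := hij
      show (P (i:ℕ)).coeff (j:ℕ) = 0
      exact Polynomial.coeff_eq_zero_of_natDegree_lt (by rw [(hdP (i:ℕ)).2]; exact hij')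
  have hdetS : S.det = 1 := by
    rw [Matrix.det_of_upperTriangular (fun i j hij => ?_)]
    · refine Finset.prod_eq_one fun j _ => ?_
      show (Q b c (j:ℕ)).coeff (j:ℕ) = 1
      have : (Q b c (j:ℕ)).coeff (j:ℕ) = (Q b c (j:ℕ)).leadingCoeff := by
        rw [Polynomial.leadingCoeff, (hdQ (j:ℕ)).2]
      rw [this]
      exact (hdQ (j:ℕ)).1
    · have hij' : (j:ℕ) < (i:ℕ) := hij
      show (Q b c (j:ℕ)).coeff (i:ℕ) = 0
      exact Polynomial.coeff_eq_zero_of_natDegree_lt (by rw [(hdQ (j:ℕ)).2]; exact hij')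
  -- the product is the matrix of pairings
  have key : T * H * S = Matrix.of fun i j : Fin (n+1) => E b c (i:ℕ) (j:ℕ) := by
    ext i j
    have h1 : (T * H * S) i j
        = ∑ l : Fin (n+1), ∑ k : Fin (n+1),
            (P (i:ℕ)).coeff (k:ℕ) * μ ((k:ℕ)+(l:ℕ)) * (Q b c (j:ℕ)).coeff (l:ℕ) := by
      simp only [Matrix.mul_apply, Matrix.of_apply, Finset.sum_mul, hH, hT, hS]
    rw [h1]
    have h2 : ∑ l : Fin (n+1), ∑ k : Fin (n+1),
          (P (i:ℕ)).coeff (k:ℕ) * μ ((k:ℕ)+(l:ℕ)) * (Q b c (j:ℕ)).coeff (l:ℕ)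
        = ∑ l ∈ range (n+1), ∑ k ∈ range (n+1),
            (P (i:ℕ)).coeff k * μ (k+l) * (Q b c (j:ℕ)).coeff l := by
      rw [Fin.sum_univ_eq_sum_range (fun l => ∑ k : Fin (n+1),
        (P (i:ℕ)).coeff (k:ℕ) * μ ((k:ℕ)+l) * (Q b c (j:ℕ)).coeff l)]
      exact Finset.sum_congr rfl fun l _ =>
        Fin.sum_univ_eq_sum_range (fun k => (P (i:ℕ)).coeff k * μ (k+l) * (Q b c (j:ℕ)).coeff l) _
    rw [h2, Finset.sum_comm]
    have h3 : ∑ k ∈ range (n+1), ∑ l ∈ range (n+1),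
          (P (i:ℕ)).coeff k * μ (k+l) * (Q b c (j:ℕ)).coeff l
        = ∑ k ∈ range (n+1), ∑ l ∈ range (n+1),
            (P (i:ℕ)).coeff k * (Q b c (j:ℕ)).coeff l * μ (k+l) :=
      Finset.sum_congr rfl fun k _ => Finset.sum_congr rfl fun l _ => by ring
    rw [h3, ← L_mul μ (P (i:ℕ)) (Q b c (j:ℕ)) (n+1)
      (by rw [(hdP (i:ℕ)).2]; exact i.isLt) (by rw [(hdQ (j:ℕ)).2]; exact j.isLt)]
    exact eEq hP0 hP1 hP hμ (j:ℕ) (i:ℕ)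
  -- conclude
  have hdet : H.det = (Matrix.of fun i j : Fin (n+1) => E b c (i:ℕ) (j:ℕ)).det := by
    rw [← key, Matrix.det_mul, Matrix.det_mul, hdetT, hdetS]
    ring
  rw [hdet, Matrix.det_of_lowerTriangular _ (fun i j hij => ?_)]
  · have : ∀ i : Fin (n+1), (Matrix.of fun i j : Fin (n+1) => E b c (i:ℕ) (j:ℕ)) i i
        = E b c (i:ℕ) (i:ℕ) := fun i => rfl
    rw [Finset.prod_congr rfl (fun i _ => this i)]
    rw [Fin.prod_univ_eq_prod_range (fun i => E b c i i) (n+1)]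
    exact prodE b c n
  · have hij' : (i:ℕ) < (j:ℕ) := hij
    show E b c (i:ℕ) (j:ℕ) = 0
    rcases Nat.eq_zero_or_pos (i:ℕ) with hi | hi
    · rw [hi]
      simp only [E, if_neg (by omega : (j:ℕ) ≠ 0), if_pos rfl, if_true]
    · simp only [E, if_neg (by omega : (j:ℕ) ≠ 0), if_neg (by omega : (i:ℕ) ≠ 0)]
      rw [Nat.choose_eq_zero_of_lt (by omega)]
      simp
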